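/- Let μ > 0 and let r ≥ 1 and t ≥ 0 be integers. Then ∫₀^∞ e^{−μs} · (1 − (1 − e^{−μs})^r)^t ds = (1/(μ r)) · B(t+1, 1/r), where B is the real Beta function. -/

import Mathlib

open MeasureTheory

/-- The real Beta function `B(x,y) = ∫₀¹ v^(x-1) (1-v)^(y-1) dv`. -/
noncomputable def betaFn (x y : ℝ) : ℝ :=
  ∫ v in (0:ℝ)..1, v ^ (x - 1) * (1 - v) ^ (y - 1)

/-- Integrating the low-traffic survival function of the download time of an
(r,t)-availability code over `[0,∞)` gives `(1/(μ r)) B(t+1, 1/r)`. -/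
theorem integral_survival_eq_beta (μ : ℝ) (hμ : 0 < μ) (r t : ℕ) (hr : 1 ≤ r) :
    ∫ s in Set.Ioi (0:ℝ),
        Real.exp (-μ * s) * (1 - (1 - Real.exp (-μ * s)) ^ r) ^ t
      = 1 / (μ * r) * betaFn ((t : ℝ) + 1) (1 / r) := by
  have hrR : (0:ℝ) < r := by exact_mod_cast Nat.lt_of_lt_of_le Nat.zero_lt_one hr
  have hrne : (r:ℝ) ≠ 0 := ne_of_gt hrR
  set J : ℝ := ∫ s in Set.Ioi (0:ℝ),
      Real.exp (-μ * s) * (1 - (1 - Real.exp (-μ * s)) ^ r) ^ t with hJ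
  set I : ℝ := ∫ u in Set.Ioo (0:ℝ) 1, (1 - u ^ r) ^ t with hI
  -- Step 1: first substitution u = 1 - exp(-μ s)
  have hE1 : (fun s => 1 - Real.exp (-μ * s)) '' Set.Ioi (0:ℝ) = Set.Ioo 0 1 := by
    ext y
    constructor
    · rintro ⟨s, hs, rfl⟩
      have hs' : (0:ℝ) < s := hs
      have h1 : Real.exp (-μ * s) < 1 := by
        rw [Real.exp_lt_one_iff]; nlinarith
      have h2 : 0 < Real.exp (-μ * s) := Real.exp_pos _
      simp only [Set.mem_Ioo]
      exact ⟨by linarith, by linarith⟩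
    · rintro ⟨hy0, hy1⟩
      refine ⟨-Real.log (1 - y) / μ, ?_, ?_⟩
      · have hlog : Real.log (1 - y) < 0 :=
          Real.log_neg (by linarith) (by linarith)
        exact div_pos (by linarith) hμ
      · have : -μ * (-Real.log (1 - y) / μ) = Real.log (1 - y) := by
          field_simp
        show 1 - Real.exp (-μ * (-Real.log (1 - y) / μ)) = y
        rw [this, Real.exp_log (by linarith)]
        ring
  have hstep1 : I = μ * J := by
    rw [hJ]
    have hderiv : ∀ s ∈ Set.Ioi (0:ℝ),
        HasDerivWithinAt (fun s => 1 - Real.exp (-μ * s)) (μ * Real.exp (-μ * s))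
          (Set.Ioi 0) s := by
      intro s _
      have h : HasDerivAt (fun s : ℝ => 1 - Real.exp (-μ * s)) (μ * Real.exp (-μ * s)) s := by
        have h1 : HasDerivAt (fun s : ℝ => -μ * s) (-μ) s := by
          simpa using (hasDerivAt_id s).const_mul (-μ)
        have h2 := h1.exp
        have h3 := (hasDerivAt_const s (1:ℝ)).sub h2
        exact h3.congr_deriv (by ring)
      exact h.hasDerivWithinAt
    have hinj : Set.InjOn (fun s => 1 - Real.exp (-μ * s)) (Set.Ioi 0) := by
      intro a _ b _ hab
      simp only at hab
      have : Real.exp (-μ * a) = Real.exp (-μ * b) := by linarith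
      have h3 : -μ * a = -μ * b := Real.exp_injective this
      exact mul_left_cancel₀ (neg_ne_zero.mpr (ne_of_gt hμ)) h3
    have := MeasureTheory.integral_image_eq_integral_abs_deriv_smul measurableSet_Ioi
      hderiv hinj (fun u => ((1 - u ^ r) ^ t : ℝ))
    rw [hE1] at this
    rw [hI, this]
    rw [← MeasureTheory.integral_const_mul]
    apply MeasureTheory.setIntegral_congr_fun measurableSet_Ioi
    intro s _
    have : |μ * Real.exp (-μ * s)| = μ * Real.exp (-μ * s) :=
      abs_of_pos (mul_pos hμ (Real.exp_pos _))
    simp only [smul_eq_mul, this]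
    ring
  -- Step 2: substitution v = u^r
  have hE2 : (fun u : ℝ => u ^ r) '' Set.Ioo (0:ℝ) 1 = Set.Ioo 0 1 := by
    ext y
    constructor
    · rintro ⟨u, ⟨hu0, hu1⟩, rfl⟩
      exact ⟨pow_pos hu0 r, pow_lt_one₀ (le_of_lt hu0) hu1 (by omega)⟩
    · rintro ⟨hy0, hy1⟩
      refine ⟨y ^ ((1:ℝ)/r), ⟨Real.rpow_pos_of_pos hy0 _, ?_⟩, ?_⟩
      · exact Real.rpow_lt_one (le_of_lt hy0) hy1 (by positivity)
      · show (y ^ ((1:ℝ)/r)) ^ r = y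
        rw [← Real.rpow_natCast (y ^ ((1:ℝ)/r)) r, ← Real.rpow_mul (le_of_lt hy0)]
        rw [one_div_mul_cancel hrne, Real.rpow_one]
  have hstep2 : (∫ v in Set.Ioo (0:ℝ) 1, v ^ ((1:ℝ)/r - 1) * (1 - v) ^ t) = r * I := by
    have hderiv : ∀ u ∈ Set.Ioo (0:ℝ) 1,
        HasDerivWithinAt (fun u : ℝ => u ^ r) ((r:ℝ) * u ^ (r - 1)) (Set.Ioo 0 1) u :=
      fun u _ => (hasDerivAt_pow r u).hasDerivWithinAt
    have hinj : Set.InjOn (fun u : ℝ => u ^ r) (Set.Ioo 0 1) := by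
      intro a ha b hb hab
      exact (pow_left_strictMonoOn₀ (n := r) (by omega)).injOn
        (le_of_lt ha.1) (le_of_lt hb.1) hab
    have := MeasureTheory.integral_image_eq_integral_abs_deriv_smul measurableSet_Ioo
      hderiv hinj (fun v => v ^ ((1:ℝ)/r - 1) * (1 - v) ^ t)
    rw [hE2] at this
    rw [this, hI, ← MeasureTheory.integral_const_mul]
    apply MeasureTheory.setIntegral_congr_fun measurableSet_Ioo
    intro u ⟨hu0, hu1⟩
    simp only [smul_eq_mul]
    have habs : |(r:ℝ) * u ^ (r - 1)| = (r:ℝ) * u ^ (r - 1) :=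
      abs_of_pos (mul_pos hrR (pow_pos hu0 _))
    rw [habs]
    have hup : (0:ℝ) < u ^ r := pow_pos hu0 r
    have hpowr : (u ^ r : ℝ) ^ ((1:ℝ)/r - 1) = u ^ ((1:ℝ) - r) := by
      rw [← Real.rpow_natCast u r, ← Real.rpow_mul (le_of_lt hu0)]
      congr 1
      field_simp
    have hnpow : (u : ℝ) ^ (r - 1) = u ^ ((r:ℝ) - 1) := by
      rw [← Real.rpow_natCast u (r - 1)]
      congr 1
      push_cast [Nat.cast_sub hr]
      ring
    rw [hpowr, hnpow]
    have hkey : u ^ ((r:ℝ) - 1) * u ^ ((1:ℝ) - r) = 1 := by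
      rw [← Real.rpow_add hu0]
      norm_num
    calc (r:ℝ) * u ^ ((r:ℝ) - 1) * (u ^ ((1:ℝ) - r) * (1 - u ^ r) ^ t)
        = (r:ℝ) * (u ^ ((r:ℝ) - 1) * u ^ ((1:ℝ) - r)) * (1 - u ^ r) ^ t := by ring
      _ = (r:ℝ) * (1 - u ^ r) ^ t := by rw [hkey]; ring
  -- Step 3: betaFn in terms of the Ioo integral, via v ↦ 1 - v
  have hbeta : betaFn ((t : ℝ) + 1) (1 / r) = r * I := by
    rw [betaFn]
    rw [intervalIntegral.integral_of_le (by norm_num : (0:ℝ) ≤ 1),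
      MeasureTheory.integral_Ioc_eq_integral_Ioo]
    have hE3 : (fun v : ℝ => 1 - v) '' Set.Ioo (0:ℝ) 1 = Set.Ioo 0 1 := by
      rw [Set.image_const_sub_Ioo]; norm_num
    have hderiv : ∀ v ∈ Set.Ioo (0:ℝ) 1,
        HasDerivWithinAt (fun v : ℝ => 1 - v) (-1) (Set.Ioo 0 1) v :=
      fun v _ => (((hasDerivAt_id v).const_sub (1:ℝ)).hasDerivWithinAt)
    have hinj : Set.InjOn (fun v : ℝ => 1 - v) (Set.Ioo 0 1) := by
      intro a _ b _ hab; simp only at hab; linarith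
    have := MeasureTheory.integral_image_eq_integral_abs_deriv_smul measurableSet_Ioo
      hderiv hinj (fun v => v ^ ((t:ℝ) + 1 - 1) * (1 - v) ^ ((1:ℝ)/r - 1))
    rw [hE3] at this
    rw [this, ← hstep2]
    apply MeasureTheory.setIntegral_congr_fun measurableSet_Ioo
    intro v ⟨hv0, hv1⟩
    simp only [smul_eq_mul, abs_neg, abs_one, one_mul]
    have h1 : ((1:ℝ) - v) ^ ((t:ℝ) + 1 - 1) = (1 - v) ^ t := by
      rw [add_sub_cancel_right, Real.rpow_natCast]
    have h2 : (1 - (1 - v)) = v := by ring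
    rw [h1, h2]
    ring
  rw [hbeta, hstep1]
  field_simp
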